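/- Let u : ℝ³ → ℝ be a differentiable function that is even in the first and second variables: u(−x, y, z) = u(x, y, z) and u(x, −y, z) = u(x, y, z) for all (x,y,z). Suppose there exist real numbers z₁ < z₂ < z₃ < z₄ such that u(0,0,z₁) < 0, u(0,0,z₂) > 0, u(0,0,z₃) < 0, and u(0,0,z₄) > 0. Then there exist at least two distinct points p = (0, 0, ζ) on the z-axis with z₁ < ζ < z₄ at which the full gradient vanishes: ∇u(p) = 0. -/

import Mathlib

private lemma clm_zero_of_basis (L : ℝ × ℝ × ℝ →L[ℝ] ℝ)
    (h1 : L (1, 0, 0) = 0) (h2 : L (0, 1, 0) = 0) (h3 : L (0, 0, 1) = 0) :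
    L = 0 := by
  apply ContinuousLinearMap.ext
  rintro ⟨a, b, c⟩
  have hv : ((a, b, c) : ℝ × ℝ × ℝ)
      = a • ((1:ℝ), (0:ℝ), (0:ℝ)) + b • (0, 1, 0) + c • (0, 0, 1) := by
    simp [Prod.ext_iff]
  rw [hv, map_add, map_add, map_smul, map_smul, map_smul, h1, h2, h3]
  simp

private lemma even_deriv_zero (f : ℝ → ℝ) (hf : ∀ t, f (-t) = f t) {d : ℝ}
    (h : HasDerivAt f d 0) : d = 0 := by
  have h2 : HasDerivAt (fun t => f (-t)) (-d) 0 := by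
    have hneg : HasDerivAt (fun t : ℝ => -t) (-1) 0 := hasDerivAt_neg 0
    have h0 : HasDerivAt f d ((fun t : ℝ => -t) 0) := by simpa using h
    have := h0.comp 0 hneg
    simp only [mul_neg, mul_one] at this
    exact this
  have hfe : (fun t => f (-t)) = f := funext hf
  rw [hfe] at h2
  have := h.unique h2
  linarith

/-- let `u : ℝ³ → ℝ` be differentiable, even in the first and in the
second variable.  If `z ↦ u(0,0,z)` takes the sign pattern `−, +, −, +` at points
`z₁ < z₂ < z₃ < z₄`, then there are at least two distinct points `(0,0,ζ)` on the
`z`-axis, with `z₁ < ζ < z₄`, at which the full gradient (Fréchet derivative) of `u`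
vanishes. -/
theorem two_critical_points_on_axis_from_sign_changes
    (u : ℝ × ℝ × ℝ → ℝ) (hdiff : Differentiable ℝ u)
    (heven_x : ∀ x y z : ℝ, u (-x, y, z) = u (x, y, z))
    (heven_y : ∀ x y z : ℝ, u (x, -y, z) = u (x, y, z))
    (z₁ z₂ z₃ z₄ : ℝ) (h12 : z₁ < z₂) (h23 : z₂ < z₃) (h34 : z₃ < z₄)
    (h1 : u (0, 0, z₁) < 0) (h2 : 0 < u (0, 0, z₂))
    (h3 : u (0, 0, z₃) < 0) (h4 : 0 < u (0, 0, z₄)) :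
    ∃ ζ ζ' : ℝ, z₁ < ζ ∧ ζ < z₄ ∧ z₁ < ζ' ∧ ζ' < z₄ ∧ ζ ≠ ζ' ∧
      fderiv ℝ u (0, 0, ζ) = 0 ∧ fderiv ℝ u (0, 0, ζ') = 0 := by
  set g : ℝ → ℝ := fun t => u (0, 0, t) with hg
  have hgd : ∀ t : ℝ, HasDerivAt g (fderiv ℝ u (0, 0, t) (0, 0, 1)) t := by
    intro t
    have hγ : HasDerivAt (fun s : ℝ => ((0:ℝ), (0:ℝ), s)) ((0:ℝ), (0:ℝ), (1:ℝ)) t := by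
      exact HasDerivAt.prodMk (hasDerivAt_const t (0:ℝ)) (HasDerivAt.prodMk (hasDerivAt_const t (0:ℝ)) (hasDerivAt_id t))
    exact (hdiff (0, 0, t)).hasFDerivAt.comp_hasDerivAt t hγ
  have hgc : Continuous g := hdiff.continuous.comp (by fun_prop)
  -- max on [z₁, z₃]
  obtain ⟨c, hc, hmax⟩ := isCompact_Icc.exists_isMaxOn (s := Set.Icc z₁ z₃)
    ⟨z₂, le_of_lt h12, le_of_lt h23⟩ (hgc.continuousOn)
  have hgc2 : (0:ℝ) < g c := lt_of_lt_of_le h2 (hmax ⟨le_of_lt h12, le_of_lt h23⟩)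
  have hc1 : z₁ < c := lt_of_le_of_ne hc.1 (by rintro rfl; exact absurd hgc2 (not_lt.2 h1.le))
  have hc3 : c < z₃ := lt_of_le_of_ne hc.2 (by rintro rfl; exact absurd hgc2 (not_lt.2 h3.le))
  have hloc : IsLocalMax g c := hmax.isLocalMax (Icc_mem_nhds hc1 hc3)
  have hdc : deriv g c = 0 := hloc.deriv_eq_zero
  -- min on [z₂, z₄]
  obtain ⟨c', hc', hmin⟩ := isCompact_Icc.exists_isMinOn (s := Set.Icc z₂ z₄)
    ⟨z₃, le_of_lt h23, le_of_lt h34⟩ (hgc.continuousOn)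
  have hgc2' : g c' < 0 := lt_of_le_of_lt (hmin ⟨le_of_lt h23, le_of_lt h34⟩) h3
  have hc2 : z₂ < c' := lt_of_le_of_ne hc'.1 (by rintro rfl; exact absurd hgc2' (not_lt.2 h2.le))
  have hc4 : c' < z₄ := lt_of_le_of_ne hc'.2 (by rintro rfl; exact absurd hgc2' (not_lt.2 h4.le))
  have hloc' : IsLocalMin g c' := hmin.isLocalMin (Icc_mem_nhds hc2 hc4)
  have hdc' : deriv g c' = 0 := hloc'.deriv_eq_zero
  -- partial derivatives in x and y vanish on the axis
  have hx : ∀ ζ : ℝ, fderiv ℝ u (0, 0, ζ) (1, 0, 0) = 0 := by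
    intro ζ
    have hγ : HasDerivAt (fun s : ℝ => (s, (0:ℝ), ζ)) ((1:ℝ), (0:ℝ), (0:ℝ)) 0 :=
      HasDerivAt.prodMk (hasDerivAt_id (0:ℝ)) (HasDerivAt.prodMk (hasDerivAt_const (0:ℝ) (0:ℝ)) (hasDerivAt_const (0:ℝ) ζ))
    have h := (hdiff (0, 0, ζ)).hasFDerivAt.comp_hasDerivAt 0 hγ
    exact even_deriv_zero _ (fun t => heven_x t 0 ζ) h
  have hy : ∀ ζ : ℝ, fderiv ℝ u (0, 0, ζ) (0, 1, 0) = 0 := by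
    intro ζ
    have hγ : HasDerivAt (fun s : ℝ => ((0:ℝ), s, ζ)) ((0:ℝ), (1:ℝ), (0:ℝ)) 0 :=
      HasDerivAt.prodMk (hasDerivAt_const (0:ℝ) (0:ℝ)) (HasDerivAt.prodMk (hasDerivAt_id (0:ℝ)) (hasDerivAt_const (0:ℝ) ζ))
    have h := (hdiff (0, 0, ζ)).hasFDerivAt.comp_hasDerivAt 0 hγ
    exact even_deriv_zero _ (fun t => heven_y 0 t ζ) h
  have hz : ∀ ζ : ℝ, deriv g ζ = 0 → fderiv ℝ u (0, 0, ζ) (0, 0, 1) = 0 := by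
    intro ζ h
    rw [← (hgd ζ).deriv, h]
  refine ⟨c, c', hc1, lt_trans hc3 h34, lt_trans h12 hc2, hc4, ?_, ?_, ?_⟩
  · rintro rfl; exact absurd hgc2 (not_lt.2 hgc2'.le)
  · exact clm_zero_of_basis _ (hx c) (hy c) (hz c hdc)
  · exact clm_zero_of_basis _ (hx c') (hy c') (hz c' hdc')
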